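/- Let R be a symmetric (2,2)-double form satisfying the first Bianchi identity on an n-dimensional real inner product space (V,g). Then the Girard–Newton identities hold: c N_{2k}(R) = (n−2k−1)·T_{2k}(R) for 2 ≤ 2k ≤ n−2, and c T_{2k}(R) = (n−2k)·h_{2k}(R) for 2 ≤ 2k ≤ n−1. -/
import Mathlib


noncomputable section

open Finset

/-- Double forms over an `n`-dimensional real inner product space, described by their
coefficients in a fixed orthonormal basis: a `(p,q)`-double form corresponds to a function
supported on pairs of subsets of cardinalities `p` and `q`. -/
abbrev DForm (n : ℕ) := Finset (Fin n) → Finset (Fin n) → ℝ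

namespace DForm

variable {n : ℕ}

/-- Sign of the shuffle placing the elements of `A` (in increasing order) before
those of `B` (in increasing order). -/
def shuffleSign (A B : Finset (Fin n)) : ℝ :=
  (-1 : ℝ) ^ (∑ x ∈ B, (A.filter fun a => x < a).card)

/-- The exterior product of double forms. -/
def wedge (ω₁ ω₂ : DForm n) : DForm n := fun I J =>
  ∑ A ∈ I.powerset, ∑ B ∈ J.powerset,
    shuffleSign A (I \ A) * shuffleSign B (J \ B) * ω₁ A B * ω₂ (I \ A) (J \ B)

/-- Exterior powers `ω^k` of a double form. -/
def dpow (ω : DForm n) : ℕ → DForm n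
  | 0 => fun I J => if I = ∅ ∧ J = ∅ then 1 else 0
  | k + 1 => wedge ω (dpow ω k)

/-- The double Hodge star operator. -/
def hstar (ω : DForm n) : DForm n := fun I J =>
  shuffleSign Iᶜ I * shuffleSign Jᶜ J * ω Iᶜ Jᶜ

/-- The contraction `c` of double forms. -/
def contr (ω : DForm n) : DForm n := fun I J =>
  ∑ j : Fin n,
    if j ∈ I ∨ j ∈ J then 0
    else shuffleSign {j} I * shuffleSign {j} J * ω (insert j I) (insert j J)

/-- Iterated contraction `c^k`. -/
def citer (ω : DForm n) : ℕ → DForm n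
  | 0 => ω
  | k + 1 => contr (citer ω k)

/-- The inner product of double forms. -/
def dinner (ω₁ ω₂ : DForm n) : ℝ :=
  ∑ I : Finset (Fin n), ∑ J : Finset (Fin n), ω₁ I J * ω₂ I J

/-- The transpose `ω^t` of a double form. -/
def transp (ω : DForm n) : DForm n := fun I J => ω J I

/-- The composition (Greub) product `ω₁ ∘ ω₂` of double forms. -/
def comp (ω₁ ω₂ : DForm n) : DForm n := fun I J =>
  ∑ K : Finset (Fin n), ω₂ I K * ω₁ K J

/-- The scalar value of a `(0,0)`-double form. -/
def toScalar (ω : DForm n) : ℝ := ω ∅ ∅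

/-- The metric, as a `(1,1)`-double form. -/
def gMetric (n : ℕ) : DForm n := fun I J => if I = J ∧ I.card = 1 then 1 else 0

/-- Iterated composition power `ω^{∘r}` of a `(1,1)`-double form, with `ω^{∘0} = g`. -/
def cpow (ω : DForm n) : ℕ → DForm n
  | 0 => gMetric n
  | r + 1 => comp ω (cpow ω r)

/-- The `(1,1)`-double form associated to a bilinear form, given by its matrix in the
orthonormal basis. -/
def ofMatrix (h : Matrix (Fin n) (Fin n) ℝ) : DForm n := fun I J =>
  ∑ i : Fin n, ∑ j : Fin n, if I = {i} ∧ J = {j} then h i j else 0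

/-- `ω` is a `(p,q)`-double form. -/
def IsOfDeg (ω : DForm n) (p q : ℕ) : Prop :=
  ∀ I J : Finset (Fin n), ω I J ≠ 0 → I.card = p ∧ J.card = q

/-- `ω` is a symmetric double form. -/
def IsSym (ω : DForm n) : Prop := ∀ I J, ω I J = ω J I

/-- The sign relating `e_{v 0} ∧ ⋯ ∧ e_{v (p-1)}` to the corresponding increasing
basis `p`-vector (and `0` if the indices are not pairwise distinct). -/
def tupleSign {p : ℕ} (v : Fin p → Fin n) : ℝ :=
  if Function.Injective v then (((Equiv.Perm.sign (Tuple.sort v)) : ℤ) : ℝ) else 0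

/-- Evaluation of a double form on wedges of basis vectors indexed by arbitrary tuples. -/
def evalT (ω : DForm n) {p q : ℕ} (v : Fin p → Fin n) (w : Fin q → Fin n) : ℝ :=
  tupleSign v * tupleSign w * ω (Finset.image v Finset.univ) (Finset.image w Finset.univ)

/-- The first Bianchi identity for a `(2,2)`-double form:
`R(x∧y,z∧t) + R(y∧z,x∧t) + R(z∧x,y∧t) = 0`. -/
def Bianchi2 (R : DForm n) : Prop :=
  ∀ x y z t : Fin n,
    evalT R ![x, y] ![z, t] + evalT R ![y, z] ![x, t] + evalT R ![z, x] ![y, t] = 0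

/-- The first Bianchi identity for a `(p,p)`-double form. -/
def FirstBianchi (ω : DForm n) (p : ℕ) : Prop :=
  ∀ (x : Fin (p + 1) → Fin n) (y : Fin (p - 1) → Fin n),
    ∑ j : Fin (p + 1),
      (-1 : ℝ) ^ (j : ℕ) * evalT ω (x ∘ Fin.succAbove j) (Fin.cons (x j) y) = 0

/-- The characteristic coefficient `s_k(h)` of a bilinear form `h`, defined through the
characteristic polynomial: `det(h - λ g) = ∑ (-1)^(n-i) s_i(h) λ^(n-i)`. -/
def sInv (h : Matrix (Fin n) (Fin n) ℝ) (k : ℕ) : ℝ :=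
  (-1 : ℝ) ^ k * (Matrix.charpoly h).coeff (n - k)

/-- The `k`-th cofactor (Newton) transformation `t_k(h) = (1/(k!(n-1-k)!)) *(g^{n-1-k} h^k)`. -/
def tInv (h : Matrix (Fin n) (Fin n) ℝ) (k : ℕ) : DForm n :=
  ((k.factorial * (n - 1 - k).factorial : ℕ) : ℝ)⁻¹ •
    hstar (wedge (dpow (gMetric n) (n - 1 - k)) (dpow (ofMatrix h) k))

/-- The `(r,q)`-cofactor `s_{(r,q)}(h) = (1/(q!(n-q-r)!)) *(g^{n-q-r} h^q)`. -/
def sCof (h : Matrix (Fin n) (Fin n) ℝ) (r q : ℕ) : DForm n :=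
  ((q.factorial * (n - q - r).factorial : ℕ) : ℝ)⁻¹ •
    hstar (wedge (dpow (gMetric n) (n - q - r)) (dpow (ofMatrix h) q))

end DForm
namespace DForm
variable {n : ℕ}

/-- The Gauss–Bonnet invariant `h_{2k}(R) = c^{2k}(R^k)/(2k)!`. -/
noncomputable def hGB (R : DForm n) (k : ℕ) : ℝ :=
  toScalar (citer (dpow R k) (2 * k)) / ((2 * k).factorial : ℝ)

/-- The Einstein–Lovelock tensor `T_{2k}(R) = (c^{2k}(R^k)/(2k)!) g - c^{2k-1}(R^k)/(2k-1)!`. -/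
noncomputable def TT (R : DForm n) (k : ℕ) : DForm n :=
  (toScalar (citer (dpow R k) (2 * k)) / ((2 * k).factorial : ℝ)) • gMetric n
    - (((2 * k - 1).factorial : ℕ) : ℝ)⁻¹ • citer (dpow R k) (2 * k - 1)

/-- The cofactor transformation
`N_{2k}(R) = c^{2k-2}(R^k)/(2k-2)! - (c^{2k-1}(R^k)/(2k-1)!) g + (c^{2k}(R^k)/(2 (2k)!)) g²`. -/
noncomputable def NN (R : DForm n) (k : ℕ) : DForm n :=
  (((2 * k - 2).factorial : ℕ) : ℝ)⁻¹ • citer (dpow R k) (2 * k - 2)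
    - (((2 * k - 1).factorial : ℕ) : ℝ)⁻¹ • wedge (citer (dpow R k) (2 * k - 1)) (gMetric n)
    + (toScalar (citer (dpow R k) (2 * k)) / (2 * ((2 * k).factorial : ℝ))) •
        dpow (gMetric n) 2

end DForm

open Finset DForm
variable {n : ℕ}

lemma dz_apply (I J : Finset (Fin n)) (ω : DForm n) :
    dpow ω 0 I J = if I = ∅ ∧ J = ∅ then 1 else 0 := rfl

lemma shuffleSign_empty_right (A : Finset (Fin n)) : shuffleSign A ∅ = 1 := by
  simp [shuffleSign]

lemma shuffleSign_singleton (a b : Fin n) :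
    shuffleSign ({a} : Finset (Fin n)) {b} = if b < a then -1 else 1 := by
  simp only [shuffleSign, Finset.sum_singleton, Finset.filter_singleton]
  split <;> simp

lemma wedge_dpow_zero (ω ω' : DForm n) : wedge ω (dpow ω' 0) = ω := by
  funext I J
  unfold wedge
  rw [Finset.sum_eq_single I]
  · rw [Finset.sum_eq_single J]
    · simp [dz_apply, shuffleSign_empty_right]
    · intro B hB hBne
      have : J \ B ≠ ∅ := by
        rw [Ne, Finset.sdiff_eq_empty_iff_subset]
        intro h
        exact hBne (Finset.Subset.antisymm (Finset.mem_powerset.1 hB) h)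
      simp [dz_apply, this]
    · intro h; exact absurd (Finset.mem_powerset.2 (Finset.Subset.refl J)) h
  · intro A hA hAne
    have : I \ A ≠ ∅ := by
      rw [Ne, Finset.sdiff_eq_empty_iff_subset]
      intro h
      exact hAne (Finset.Subset.antisymm (Finset.mem_powerset.1 hA) h)
    apply Finset.sum_eq_zero
    intro B _
    simp [dz_apply, this]
  · intro h; exact absurd (Finset.mem_powerset.2 (Finset.Subset.refl I)) h

lemma isOfDeg_smul {ω : DForm n} {p q : ℕ} (a : ℝ) (h : IsOfDeg ω p q) :
    IsOfDeg (a • ω) p q := by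
  intro I J hne
  refine h I J fun h0 => hne ?_
  simp [Pi.smul_apply, h0]

lemma isOfDeg_wedge {ω₁ ω₂ : DForm n} {p q r s : ℕ} (h₁ : IsOfDeg ω₁ p q)
    (h₂ : IsOfDeg ω₂ r s) : IsOfDeg (wedge ω₁ ω₂) (p + r) (q + s) := by
  intro I J hne
  unfold wedge at hne
  obtain ⟨A, hA, hA2⟩ := Finset.exists_ne_zero_of_sum_ne_zero hne
  obtain ⟨B, hB, hB2⟩ := Finset.exists_ne_zero_of_sum_ne_zero hA2
  have h1 : ω₁ A B ≠ 0 := fun h0 => hB2 (by simp [h0])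
  have h2 : ω₂ (I \ A) (J \ B) ≠ 0 := fun h0 => hB2 (by simp [h0])
  obtain ⟨e1, e2⟩ := h₁ _ _ h1
  obtain ⟨f1, f2⟩ := h₂ _ _ h2
  rw [Finset.mem_powerset] at hA hB
  have c1 := Finset.card_sdiff_add_card_eq_card hA
  have c2 := Finset.card_sdiff_add_card_eq_card hB
  omega

lemma isOfDeg_contr {ω : DForm n} {p q : ℕ} (h : IsOfDeg ω p q) :
    IsOfDeg (contr ω) (p - 1) (q - 1) := by
  intro I J hne
  unfold contr at hne
  obtain ⟨j, -, hj⟩ := Finset.exists_ne_zero_of_sum_ne_zero hne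
  split_ifs at hj with hm
  · exact absurd rfl hj
  · push_neg at hm
    have h0 : ω (insert j I) (insert j J) ≠ 0 := fun h0 => hj (by simp [h0])
    obtain ⟨e1, e2⟩ := h _ _ h0
    rw [Finset.card_insert_of_notMem hm.1] at e1
    rw [Finset.card_insert_of_notMem hm.2] at e2
    omega

lemma isOfDeg_g : IsOfDeg (gMetric n) 1 1 := by
  intro I J hne
  unfold gMetric at hne
  split_ifs at hne with h
  · exact ⟨h.2, h.1 ▸ h.2⟩
  · exact absurd rfl hne

lemma isOfDeg_dpow {ω : DForm n} {p q : ℕ} (h : IsOfDeg ω p q) (k : ℕ) :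
    IsOfDeg (dpow ω k) (k * p) (k * q) := by
  induction k with
  | zero =>
    intro I J hne
    rw [dz_apply] at hne
    split_ifs at hne with h0
    · simp [h0.1, h0.2]
    · exact absurd rfl hne
  | succ m ih =>
    have := isOfDeg_wedge h ih
    intro I J hne
    obtain ⟨e1, e2⟩ := this I J hne
    exact ⟨by rw [e1, Nat.succ_mul, Nat.add_comm], by rw [e2, Nat.succ_mul, Nat.add_comm]⟩

lemma isOfDeg_citer {ω : DForm n} {p q : ℕ} (h : IsOfDeg ω p q) (m : ℕ) :
    IsOfDeg (citer ω m) (p - m) (q - m) := by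
  induction m with
  | zero => exact h
  | succ m ih =>
    have := isOfDeg_contr ih
    intro I J hne
    obtain ⟨e1, e2⟩ := this I J hne
    omega

lemma contr_smul (a : ℝ) (ω : DForm n) : contr (a • ω) = a • contr ω := by
  funext I J
  simp only [contr, Pi.smul_apply, smul_eq_mul, Finset.mul_sum]
  refine Finset.sum_congr rfl fun j _ => ?_
  split <;> ring

lemma contr_sub (ω₁ ω₂ : DForm n) : contr (ω₁ - ω₂) = contr ω₁ - contr ω₂ := by
  funext I J
  simp only [contr, Pi.sub_apply, ← Finset.sum_sub_distrib]
  refine Finset.sum_congr rfl fun j _ => ?_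
  split <;> ring

lemma contr_add (ω₁ ω₂ : DForm n) : contr (ω₁ + ω₂) = contr ω₁ + contr ω₂ := by
  funext I J
  simp only [contr, Pi.add_apply, ← Finset.sum_add_distrib]
  refine Finset.sum_congr rfl fun j _ => ?_
  split <;> ring

lemma toScalar_contr (ω : DForm n) : toScalar (contr ω) = ∑ j : Fin n, ω {j} {j} := by
  simp [toScalar, contr, shuffleSign]

lemma g_trace : ∑ j : Fin n, gMetric n {j} {j} = (n : ℝ) := by
  simp [gMetric]


lemma sum_powerset_singleton (a : Fin n) (f : Finset (Fin n) → ℝ) :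
    ∑ t ∈ ({a} : Finset (Fin n)).powerset, f t = f ∅ + f {a} := by
  rw [show ({a} : Finset (Fin n)) = insert a ∅ from rfl,
    Finset.sum_powerset_insert (Finset.notMem_empty a), Finset.powerset_empty,
    Finset.sum_singleton, Finset.sum_singleton]

lemma insert_sdiff_left {j x : Fin n} (h : j ≠ x) :
    insert j ({x} : Finset (Fin n)) \ {j} = {x} := by
  rw [Finset.insert_sdiff_of_mem _ (Finset.mem_singleton_self j)]
  ext a
  simp only [Finset.mem_sdiff, Finset.mem_singleton]
  constructor
  · tauto
  · rintro rfl; exact ⟨rfl, fun hc => h hc.symm⟩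

lemma insert_sdiff_right {j x : Fin n} (h : j ≠ x) :
    insert j ({x} : Finset (Fin n)) \ {x} = {j} := by
  rw [Finset.insert_sdiff_of_notMem _ (by simpa using h.symm ∘ Eq.symm)]
  simp

lemma gMetric_singleton (a b : Fin n) :
    gMetric n {a} {b} = if a = b then 1 else 0 := by
  simp [gMetric, Finset.singleton_inj]

lemma bzero {b : DForm n} (hb : IsOfDeg b 1 1) {A B : Finset (Fin n)}
    (h : ¬(A.card = 1 ∧ B.card = 1)) : b A B = 0 := by
  by_contra h0; exact h (hb A B h0)

lemma wedge_g_pair {b : DForm n} (hb : IsOfDeg b 1 1) {x y j : Fin n}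
    (hjx : j ≠ x) (hjy : j ≠ y) :
    wedge b (gMetric n) (insert j {x}) (insert j {y}) =
      shuffleSign {j} {x} * shuffleSign {j} {y} * b {j} {j} * (if x = y then 1 else 0)
      + shuffleSign {x} {j} * shuffleSign {y} {j} * b {x} {y} := by
  have hjx' : j ∉ ({x} : Finset (Fin n)) := by simpa using hjx
  have hjy' : j ∉ ({y} : Finset (Fin n)) := by simpa using hjy
  have cjx : (insert j ({x} : Finset (Fin n))).card = 2 :=
    by rw [Finset.card_insert_of_notMem hjx']; rfl
  have cjy : (insert j ({y} : Finset (Fin n))).card = 2 :=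
    by rw [Finset.card_insert_of_notMem hjy']; rfl
  have b0l : ∀ B, b ∅ B = 0 := fun B => bzero hb (by simp)
  have b0l2 : ∀ B, b (insert j {x}) B = 0 := fun B => bzero hb (by simp [cjx])
  have b0r : ∀ A, b A ∅ = 0 := fun A => bzero hb (by simp)
  have b0r2 : ∀ A, b A (insert j {y}) = 0 := fun A => bzero hb (by simp [cjy])
  unfold wedge
  rw [Finset.sum_powerset_insert hjx']
  simp only [Finset.sum_powerset_insert hjy', sum_powerset_singleton]
  simp only [Finset.insert_empty]
  simp only [b0l, b0l2, b0r, b0r2, mul_zero, zero_mul, add_zero, zero_add]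
  rw [insert_sdiff_left hjx, insert_sdiff_left hjy,
    insert_sdiff_right hjx, insert_sdiff_right hjy]
  rw [gMetric_singleton x y, gMetric_singleton j j, gMetric_singleton x j, gMetric_singleton j y,
    if_pos rfl, if_neg hjy, if_neg (fun h => hjx h.symm)]
  ring

lemma sgn_anti {a c : Fin n} (h : a ≠ c) :
    shuffleSign ({a} : Finset (Fin n)) {c} * shuffleSign {c} {a} = -1 := by
  rw [shuffleSign_singleton, shuffleSign_singleton]
  rcases h.lt_or_gt with h1 | h1
  · rw [if_pos h1, if_neg (asymm h1)]; ring
  · rw [if_neg (asymm h1), if_pos h1]; ring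

lemma sgn_sq (a c : Fin n) :
    shuffleSign ({a} : Finset (Fin n)) {c} * shuffleSign {a} {c} = 1 := by
  rw [shuffleSign_singleton]; split <;> ring

lemma contr_wedge_g {b : DForm n} (hb : IsOfDeg b 1 1) (I J : Finset (Fin n)) :
    contr (wedge b (gMetric n)) I J =
      (∑ j : Fin n, b {j} {j}) * gMetric n I J + ((n : ℝ) - 2) * b I J := by
  by_cases hIJ : I.card = 1 ∧ J.card = 1
  · obtain ⟨x, rfl⟩ := Finset.card_eq_one.mp hIJ.1
    obtain ⟨y, rfl⟩ := Finset.card_eq_one.mp hIJ.2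
    unfold contr
    by_cases hxy : x = y
    · subst hxy
      have hn1 : 1 ≤ n := Fin.pos x
      have key : ∀ j : Fin n,
          (if j ∈ ({x} : Finset (Fin n)) ∨ j ∈ ({x} : Finset (Fin n)) then (0:ℝ)
            else shuffleSign {j} {x} * shuffleSign {j} {x} *
              wedge b (gMetric n) (insert j {x}) (insert j {x}))
          = if j = x then 0 else b {j} {j} + b {x} {x} := by
        intro j
        by_cases hj : j = x
        · simp [hj]
        · rw [if_neg (by simpa using hj), if_neg hj, wedge_g_pair hb hj hj, if_pos rfl]
          have e1 := sgn_sq j x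
          have e2 := sgn_sq x j
          linear_combination ((shuffleSign ({j}:Finset (Fin n)) {x} * shuffleSign {j} {x} + 1)
              * b {j} {j} + shuffleSign ({x}:Finset (Fin n)) {j} * shuffleSign {x} {j}
              * b {x} {x}) * e1 + b {x} {x} * e2
      rw [Finset.sum_congr rfl fun j _ => key j]
      rw [Finset.sum_eq_sum_sdiff_singleton_add (Finset.mem_univ x), if_pos rfl, add_zero]
      have hrw : ∀ j ∈ Finset.univ \ {x},
          (if j = x then (0:ℝ) else b {j} {j} + b {x} {x}) = b {j} {j} + b {x} {x} := by
        intro j hj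
        rw [if_neg (by simpa using (Finset.mem_sdiff.mp hj).2)]
      rw [Finset.sum_congr rfl hrw, Finset.sum_add_distrib,
        Finset.sum_sdiff_eq_sub (Finset.subset_univ {x}), Finset.sum_singleton,
        Finset.sum_const, Finset.card_sdiff_of_subset (Finset.subset_univ {x})]
      rw [gMetric_singleton, if_pos rfl]
      simp only [Finset.card_univ, Fintype.card_fin, Finset.card_singleton, nsmul_eq_mul]
      push_cast [hn1]
      ring
    · have hn2 : 2 ≤ n := by
        have h1 := Finset.card_le_univ ({x, y} : Finset (Fin n))
        rw [Finset.card_pair hxy] at h1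
        simpa using h1
      have key : ∀ j : Fin n,
          (if j ∈ ({x} : Finset (Fin n)) ∨ j ∈ ({y} : Finset (Fin n)) then (0:ℝ)
            else shuffleSign {j} {x} * shuffleSign {j} {y} *
              wedge b (gMetric n) (insert j {x}) (insert j {y}))
          = if j = x ∨ j = y then 0 else b {x} {y} := by
        intro j
        by_cases hj : j = x ∨ j = y
        · rw [if_pos (by simpa using hj), if_pos hj]
        · push_neg at hj
          rw [if_neg (by simpa using hj), if_neg (by tauto),
            wedge_g_pair hb hj.1 hj.2, if_neg hxy]
          have e1 := sgn_anti hj.1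
          have e2 := sgn_anti hj.2
          linear_combination (shuffleSign ({j}:Finset (Fin n)) {y} *
            shuffleSign {y} {j} * b {x} {y}) * e1 - b {x} {y} * e2
      rw [Finset.sum_congr rfl fun j _ => key j]
      rw [Finset.sum_ite, Finset.sum_const_zero, Finset.sum_const, zero_add]
      have hfil : Finset.univ.filter (fun j => ¬(j = x ∨ j = y))
          = ({x, y} : Finset (Fin n))ᶜ := by
        ext a; simp [not_or]
      rw [hfil, Finset.card_compl, Finset.card_pair hxy, Fintype.card_fin]
      rw [gMetric_singleton, if_neg hxy]
      simp only [nsmul_eq_mul]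
      push_cast [hn2]
      ring
  · have hdeg := isOfDeg_contr (isOfDeg_wedge hb (isOfDeg_g (n := n)))
    have h0 : contr (wedge b (gMetric n)) I J = 0 := by
      by_contra h0
      exact hIJ (by simpa using hdeg I J h0)
    have hg : gMetric n I J = 0 := by
      unfold gMetric
      rw [if_neg]
      rintro ⟨rfl, hc⟩
      exact hIJ ⟨hc, hc⟩
    rw [h0, hg, bzero hb hIJ]
    ring

open DForm in
/-- Girard–Newton identities: `c N_{2k}(R) = (n-2k-1) T_{2k}(R)` for `2 ≤ 2k ≤ n-2` and
`c T_{2k}(R) = (n-2k) h_{2k}(R)` for `2 ≤ 2k ≤ n-1`. -/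
theorem statement14 (n : ℕ) (R : DForm n) (hsym : IsSym R) (hb : Bianchi2 R)
    (hgr : IsOfDeg R 2 2) (k : ℕ) (hk : 1 ≤ k) :
    (2 * k + 2 ≤ n → contr (NN R k) = ((n - 2 * k - 1 : ℕ) : ℝ) • TT R k) ∧
    (2 * k + 1 ≤ n → toScalar (contr (TT R k)) = ((n - 2 * k : ℕ) : ℝ) * hGB R k) := by
  have hdegω : IsOfDeg (dpow R k) (2 * k) (2 * k) := by
    have := isOfDeg_dpow hgr k
    rwa [Nat.mul_comm] at this
  have hB0 : IsOfDeg (citer (dpow R k) (2 * k - 1)) 1 1 := by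
    have := isOfDeg_citer hdegω (2 * k - 1)
    rwa [show 2 * k - (2 * k - 1) = 1 by omega] at this
  have e1 : contr (citer (dpow R k) (2 * k - 2)) = citer (dpow R k) (2 * k - 1) := by
    rw [show 2 * k - 1 = (2 * k - 2) + 1 by omega]
    rfl
  have e2 : contr (citer (dpow R k) (2 * k - 1)) = citer (dpow R k) (2 * k) := by
    rw [show 2 * k = (2 * k - 1) + 1 by omega]
    rfl
  set H := toScalar (citer (dpow R k) (2 * k)) with hH
  have htr : ∑ j : Fin n, citer (dpow R k) (2 * k - 1) {j} {j} = H := by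
    rw [← toScalar_contr, e2]
  have hg2 : dpow (gMetric n) 2 = wedge (gMetric n) (gMetric n) := by
    show wedge (gMetric n) (wedge (gMetric n) (dpow (gMetric n) 0)) = _
    rw [wedge_dpow_zero]
  have fc1 : ((2 * k - 1).factorial : ℝ) = ((2 * k - 1 : ℕ) : ℝ) * ((2 * k - 2).factorial : ℝ) := by
    conv_lhs => rw [show 2 * k - 1 = (2 * k - 2) + 1 by omega]
    rw [Nat.factorial_succ, show 2 * k - 2 + 1 = 2 * k - 1 by omega]
    push_cast
    ring
  have fc2 : ((2 * k).factorial : ℝ) = ((2 * k : ℕ) : ℝ) * ((2 * k - 1).factorial : ℝ) := by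
    conv_lhs => rw [show 2 * k = (2 * k - 1) + 1 by omega]
    rw [Nat.factorial_succ, show 2 * k - 1 + 1 = 2 * k by omega]
    push_cast
    ring
  have c2ne : ((2 * k - 2).factorial : ℝ) ≠ 0 :=
    Nat.cast_ne_zero.mpr (Nat.factorial_ne_zero _)
  have c1cast : ((2 * k - 1 : ℕ) : ℝ) = 2 * (k : ℝ) - 1 := by
    have h1 : 1 ≤ 2 * k := by omega
    push_cast [h1]
    ring
  have c1ne : ((2 * k - 1 : ℕ) : ℝ) ≠ 0 := by
    rw [c1cast]
    have : (1 : ℝ) ≤ (k : ℝ) := by exact_mod_cast hk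
    nlinarith
  have c0ne : ((2 * k : ℕ) : ℝ) ≠ 0 := by
    have : (1 : ℝ) ≤ (k : ℝ) := by exact_mod_cast hk
    positivity
  have hkr : (1 : ℝ) ≤ (k : ℝ) := by exact_mod_cast hk
  have hne1 : (2 * (k : ℝ) - 1) ≠ 0 := by nlinarith
  have hne2 : (k : ℝ) ≠ 0 := by positivity
  constructor
  · intro hn
    funext I J
    unfold NN TT
    rw [contr_add, contr_sub, contr_smul, contr_smul, contr_smul, e1, hg2]
    simp only [Pi.add_apply, Pi.sub_apply, Pi.smul_apply, smul_eq_mul]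
    rw [contr_wedge_g hB0 I J, htr, contr_wedge_g (isOfDeg_g (n := n)) I J, g_trace]
    rw [show ((n - 2 * k - 1 : ℕ) : ℝ) = (n : ℝ) - 2 * k - 1 by
      rw [show n - 2 * k - 1 = n - (2 * k + 1) by omega,
        Nat.cast_sub (by omega : 2 * k + 1 ≤ n)]
      push_cast
      ring]
    rw [fc2, fc1, c1cast]
    push_cast
    field_simp
    ring
  · intro hn
    unfold TT
    rw [contr_sub, contr_smul, contr_smul]
    show (toScalar (citer (dpow R k) (2 * k)) / ((2 * k).factorial : ℝ)) *
        contr (gMetric n) ∅ ∅ -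
        (((2 * k - 1).factorial : ℕ) : ℝ)⁻¹ * contr (citer (dpow R k) (2 * k - 1)) ∅ ∅ = _
    rw [e2]
    have hgv : contr (gMetric n) ∅ ∅ = (n : ℝ) := by
      have h0 := toScalar_contr (gMetric n)
      rw [g_trace] at h0
      exact h0
    rw [hgv]
    unfold hGB
    rw [show ((n - 2 * k : ℕ) : ℝ) = (n : ℝ) - 2 * k by
      rw [Nat.cast_sub (by omega : 2 * k ≤ n)]
      push_cast
      ring]
    have hC : citer (dpow R k) (2 * k) ∅ ∅ = H := rfl
    rw [hC, fc2, fc1, c1cast]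
    push_cast
    field_simp
    ring
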